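/- Let G be a tree, u a monotone utility function, and P a partition of the vertex set of G into bundles each of which induces a connected subgraph. Then P contains at least one bundle that is good for u, i.e., a bundle B with u(B) ≥ PMMS(B∪B') for every bundle B' of P neighbouring B. -/

import Mathlib

namespace GraphFair

variable {V : Type*}

/-- A bundle is connected if it is empty or induces a connected subgraph of `G`. -/
def BundleConn (G : SimpleGraph V) (B : Finset V) : Prop :=
  B = ∅ ∨ (G.induce (B : Set V)).Connected

/-- A connected allocation of all the items among `n` agents: the bundles cover `V`,
are pairwise disjoint, and each bundle is connected in `G`. -/
def IsConnAlloc (G : SimpleGraph V) {n : ℕ} (A : Fin n → Finset V) : Prop :=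
  (∀ v : V, ∃ i, v ∈ A i) ∧
  (∀ i j : Fin n, i ≠ j → Disjoint (A i) (A j)) ∧
  (∀ i, BundleConn G (A i))

variable [DecidableEq V]

/-- Partitions of `X` into two bundles, each connected in the induced subgraph `G[X]`
(for `Y ⊆ X`, connectivity of `Y` in `G[X]` is the same as connectivity of `Y` in `G`). -/
def Part2 (G : SimpleGraph V) (X : Finset V) : Set (Finset V × Finset V) :=
  {p | p.1 ∪ p.2 = X ∧ Disjoint p.1 p.2 ∧ BundleConn G p.1 ∧ BundleConn G p.2}

/-- The pairwise maximin share of a bundle `X` with respect to utility `u`: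
the maximum over partitions of `X` into two connected bundles of the minimum utility. -/
noncomputable def pmms (G : SimpleGraph V) (u : Finset V → ℝ) (X : Finset V) : ℝ :=
  sSup ((fun p : Finset V × Finset V => min (u p.1) (u p.2)) '' Part2 G X)

/-- The `n`-agent maximin share of the whole vertex set: maximum over partitions of `V`
into `n` connected bundles of the minimum utility of a bundle. -/
noncomputable def mms (G : SimpleGraph V) (u : Finset V → ℝ) (n : ℕ) : ℝ :=
  sSup ((fun A : Fin n → Finset V => ⨅ i, u (A i)) '' {A | IsConnAlloc G A})

/-- Agents `i` and `j` are adjacent under allocation `A`. -/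
def AdjUnder (G : SimpleGraph V) {n : ℕ} (A : Fin n → Finset V) (i j : Fin n) : Prop :=
  ∃ v ∈ A i, ∃ w ∈ A j, G.Adj v w

/-- An allocation is `α`-PMMS if every agent with an empty bundle, and every agent with
respect to each of her neighbours, receives at least `α` times her pairwise maximin share. -/
def IsAlphaPMMS (G : SimpleGraph V) {n : ℕ} (u : Fin n → Finset V → ℝ)
    (A : Fin n → Finset V) (α : ℝ) : Prop :=
  ∀ i j : Fin n, i ≠ j → (A i = ∅ ∨ AdjUnder G A i j) →
    α * pmms G (u i) (A i ∪ A j) ≤ u i (A i)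

/-- An allocation is `α`-MMS if every agent receives at least `α` times her maximin share. -/
def IsAlphaMMS (G : SimpleGraph V) {n : ℕ} (u : Fin n → Finset V → ℝ)
    (A : Fin n → Finset V) (α : ℝ) : Prop :=
  ∀ i : Fin n, α * mms G (u i) n ≤ u i (A i)

/-- An additive (nonnegative) utility function. -/
def AdditiveUtil (u : Finset V → ℝ) : Prop :=
  (∀ X : Finset V, u X = ∑ v ∈ X, u {v}) ∧ ∀ v : V, 0 ≤ u {v}

/-- A binary additive utility function. -/
def BinaryAdditiveUtil (u : Finset V → ℝ) : Prop :=
  (∀ X : Finset V, u X = ∑ v ∈ X, u {v}) ∧ ∀ v : V, u {v} = 0 ∨ u {v} = 1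

/-- A monotone (nonnegative) utility function. -/
def MonotoneUtil (u : Finset V → ℝ) : Prop :=
  (∀ X Y : Finset V, X ⊆ Y → u X ≤ u Y) ∧ 0 ≤ u ∅

/-- An allocation is `α`-EF1. -/
def IsAlphaEF1 {n : ℕ} (u : Fin n → Finset V → ℝ) (A : Fin n → Finset V) (α : ℝ) : Prop :=
  ∀ i j : Fin n, i ≠ j → A j ≠ ∅ → ∃ v ∈ A j, α * u i ((A j).erase v) ≤ u i (A i)

/-- An allocation is EFX (envy-free up to any item). -/
def IsEFX {n : ℕ} (u : Fin n → Finset V → ℝ) (A : Fin n → Finset V) : Prop :=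
  ∀ i j : Fin n, i ≠ j → A j ≠ ∅ → ∀ v ∈ A j, u i ((A j).erase v) ≤ u i (A i)

/-- The number of agents receiving positive utility. -/
noncomputable def nashCount {n : ℕ} (u : Fin n → Finset V → ℝ) (A : Fin n → Finset V) : ℕ :=
  (Finset.univ.filter fun i : Fin n => 0 < u i (A i)).card

/-- The product of the positive utilities. -/
noncomputable def nashProd {n : ℕ} (u : Fin n → Finset V → ℝ) (A : Fin n → Finset V) : ℝ :=
  ∏ i ∈ Finset.univ.filter (fun i : Fin n => 0 < u i (A i)), u i (A i)

/-- A maximum Nash welfare (MNW) connected allocation: maximizes the number of agents with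
positive utility and, subject to that, the product of the positive utilities. -/
def IsMNW (G : SimpleGraph V) {n : ℕ} (u : Fin n → Finset V → ℝ)
    (A : Fin n → Finset V) : Prop :=
  IsConnAlloc G A ∧
  (∀ B : Fin n → Finset V, IsConnAlloc G B → nashCount u B ≤ nashCount u A) ∧
  (∀ B : Fin n → Finset V, IsConnAlloc G B →
    nashCount u B = nashCount u A → nashProd u B ≤ nashProd u A)

/-- `A'` is a Pareto-improvement of `A`. -/
def ParetoImproves {n : ℕ} (u : Fin n → Finset V → ℝ) (A' A : Fin n → Finset V) : Prop :=
  (∀ i, u i (A i) ≤ u i (A' i)) ∧ ∃ j, u j (A j) < u j (A' j)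

/-- A connected allocation is Pareto-optimal if no connected allocation Pareto-improves it. -/
def IsParetoOptimal (G : SimpleGraph V) {n : ℕ} (u : Fin n → Finset V → ℝ)
    (A : Fin n → Finset V) : Prop :=
  ∀ B : Fin n → Finset V, IsConnAlloc G B → ¬ ParetoImproves u B A

/-- The vector of agents' utilities rearranged in increasing order. -/
noncomputable def sortedUtils {n : ℕ} (u : Fin n → Finset V → ℝ)
    (A : Fin n → Finset V) : List ℝ :=
  (((Finset.univ : Finset (Fin n)).val.map fun i => u i (A i)).sort (· ≤ ·))

/-- `A'` is a leximin improvement of `A`: the sorted utility vector of `A'` is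
lexicographically greater than that of `A`. -/
def LeximinImproves {n : ℕ} (u : Fin n → Finset V → ℝ) (A' A : Fin n → Finset V) : Prop :=
  List.Lex (· < ·) (sortedUtils u A) (sortedUtils u A')

/-- A connected leximin allocation. -/
def IsLeximin (G : SimpleGraph V) {n : ℕ} (u : Fin n → Finset V → ℝ)
    (A : Fin n → Finset V) : Prop :=
  IsConnAlloc G A ∧ ∀ B : Fin n → Finset V, IsConnAlloc G B → ¬ LeximinImproves u B A

/-- `G` is a star: there is a central vertex adjacent to exactly all other vertices. -/
def IsStar (G : SimpleGraph V) : Prop :=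
  ∃ c : V, ∀ a b : V, G.Adj a b ↔ a ≠ b ∧ (a = c ∨ b = c)

/-- A submodular utility function. -/
def SubmodularUtil (u : Finset V → ℝ) : Prop :=
  ∀ X Y : Finset V, u (X ∪ Y) + u (X ∩ Y) ≤ u X + u Y

/-- A utility function with binary marginal gains (and `u ∅ = 0`). -/
def BinaryMarginalGains (u : Finset V → ℝ) : Prop :=
  u ∅ = 0 ∧ ∀ (X : Finset V) (v : V),
    u (insert v X) - u X = 0 ∨ u (insert v X) - u X = 1

/-- On the path with `m` vertices (edges numbered `1, …, m-1` from left to right),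
`itv m x y` is the bundle `[x, y]` of all vertices between positions `x` and `y`. -/
def itv (m x y : ℕ) : Finset (Fin m) :=
  Finset.univ.filter fun v : Fin m => x ≤ v.val ∧ v.val < y

end GraphFair


open SimpleGraph in
private lemma exists_cross_edge {α : Type*} {H : SimpleGraph α} (p : α → Prop) :
    ∀ {x y : α}, H.Walk x y → p x → ¬ p y → ∃ a b, H.Adj a b ∧ p a ∧ ¬ p b := by
  intro x y w
  induction w with
  | nil => intro hx hy; exact absurd hx hy
  | @cons a b c h w ih =>
    intro hx hy
    by_cases hp : p b
    · exact ih hp hy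
    · exact ⟨a, b, h, hx, hp⟩

open SimpleGraph in
/-- In an acyclic graph, if disjoint connected bundles `Y, Z` partition `A ∪ B` where
`A, B` are disjoint connected bundles, then one of `Y, Z` is contained in `A` or `B`. -/
private lemma key_containment {V : Type*} [DecidableEq V] (G : SimpleGraph V)
    (hG : G.IsAcyclic) (A B Y Z : Finset V) (hAB : Disjoint A B)
    (hA : GraphFair.BundleConn G A) (hB : GraphFair.BundleConn G B)
    (hY : GraphFair.BundleConn G Y) (hZ : GraphFair.BundleConn G Z)
    (hYZ : Disjoint Y Z) (hun : Y ∪ Z = A ∪ B) :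
    Y ⊆ A ∨ Y ⊆ B ∨ Z ⊆ A ∨ Z ⊆ B := by
  by_contra hcon
  push_neg at hcon
  obtain ⟨hYA, hYB, hZA, hZB⟩ := hcon
  have hYsub : (Y : Set V) ⊆ (A ∪ B : Finset V) := by
    intro v hv; exact_mod_cast hun ▸ Finset.mem_union_left _ hv
  have hZsub : (Z : Set V) ⊆ (A ∪ B : Finset V) := by
    intro v hv; exact_mod_cast hun ▸ Finset.mem_union_right _ hv
  -- From non-containment, each of Y, Z meets both A and B
  have memAB : ∀ v, v ∈ Y ∪ Z → v ∈ A ∨ v ∈ B := by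
    intro v hv; rw [hun] at hv; exact Finset.mem_union.mp hv
  obtain ⟨yB, hyBY, hyBA⟩ := Finset.not_subset.mp hYA
  obtain ⟨yA, hyAY, hyAB⟩ := Finset.not_subset.mp hYB
  obtain ⟨zB, hzBZ, hzBA⟩ := Finset.not_subset.mp hZA
  obtain ⟨zA, hzAZ, hzAB⟩ := Finset.not_subset.mp hZB
  have hyB : yB ∈ B := (memAB yB (Finset.mem_union_left _ hyBY)).resolve_left hyBA
  have hyA : yA ∈ A := (memAB yA (Finset.mem_union_left _ hyAY)).resolve_right hyAB
  have hzB : zB ∈ B := (memAB zB (Finset.mem_union_right _ hzBZ)).resolve_left hzBA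
  have hzA : zA ∈ A := (memAB zA (Finset.mem_union_right _ hzAZ)).resolve_right hzAB
  -- crossing edge within Y
  have hYconn : (G.induce (Y : Set V)).Connected := by
    rcases hY with h | h
    · exact absurd (h ▸ hyAY) (Finset.notMem_empty _)
    · exact h
  have hZconn : (G.induce (Z : Set V)).Connected := by
    rcases hZ with h | h
    · exact absurd (h ▸ hzAZ) (Finset.notMem_empty _)
    · exact h
  obtain ⟨w⟩ := hYconn.preconnected ⟨yA, hyAY⟩ ⟨yB, hyBY⟩
  obtain ⟨a₁, b₁, hadj₁, ha₁, hb₁⟩ :=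
    exists_cross_edge (fun v : (Y : Set V) => (v : V) ∈ A) w hyA (by simpa using hyBA)
  obtain ⟨w'⟩ := hZconn.preconnected ⟨zA, hzAZ⟩ ⟨zB, hzBZ⟩
  obtain ⟨a₂, b₂, hadj₂, ha₂, hb₂⟩ :=
    exists_cross_edge (fun v : (Z : Set V) => (v : V) ∈ A) w' hzA (by simpa using hzBA)
  have hb₁B : (b₁ : V) ∈ B := ((memAB _ (Finset.mem_union_left _ b₁.2)).resolve_left hb₁)
  have hb₂B : (b₂ : V) ∈ B := ((memAB _ (Finset.mem_union_right _ b₂.2)).resolve_left hb₂)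
  have hGadj₁ : G.Adj (a₁ : V) (b₁ : V) := hadj₁
  have hGadj₂ : G.Adj (a₂ : V) (b₂ : V) := hadj₂
  -- the edge (a₁, b₁) is a bridge
  have hbridge := (SimpleGraph.isAcyclic_iff_forall_adj_isBridge.mp hG hGadj₁)
  rw [SimpleGraph.isBridge_iff] at hbridge
  apply hbridge
  set G' := G \ SimpleGraph.fromEdgeSet {s((a₁ : V), (b₁ : V))} with hG'
  -- edges within A or within B avoid the bridge edge (b₁ ∈ B)
  have hedge_ne : ∀ x y : V, x ∈ A → s(x, y) ≠ s((a₁ : V), (b₁ : V)) ∨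
      True := fun _ _ _ => Or.inr trivial
  have avoidA : ∀ x y : V, x ∈ A → y ∈ A → G.Adj x y → G'.Adj x y := by
    intro x y hx hy hxy
    refine ⟨hxy, ?_⟩
    simp only [SimpleGraph.fromEdgeSet_adj, Set.mem_singleton_iff]
    rintro ⟨he, -⟩
    have : (b₁ : V) ∈ s(x, y) := he ▸ Sym2.mem_mk_right _ _
    rcases Sym2.mem_iff.mp this with rfl | rfl
    · exact (Finset.disjoint_left.mp hAB hx) hb₁B
    · exact (Finset.disjoint_left.mp hAB hy) hb₁B
  have avoidB : ∀ x y : V, x ∈ B → y ∈ B → G.Adj x y → G'.Adj x y := by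
    intro x y hx hy hxy
    refine ⟨hxy, ?_⟩
    simp only [SimpleGraph.fromEdgeSet_adj, Set.mem_singleton_iff]
    rintro ⟨he, -⟩
    have : (a₁ : V) ∈ s(x, y) := he ▸ Sym2.mem_mk_left _ _
    rcases Sym2.mem_iff.mp this with rfl | rfl
    · exact (Finset.disjoint_left.mp hAB ha₁) hx
    · exact (Finset.disjoint_left.mp hAB ha₁) hy
  have hAconn : (G.induce (A : Set V)).Connected := by
    rcases hA with h | h
    · exact absurd (h ▸ hyA) (Finset.notMem_empty _)
    · exact h
  have hBconn : (G.induce (B : Set V)).Connected := by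
    rcases hB with h | h
    · exact absurd (h ▸ hyB) (Finset.notMem_empty _)
    · exact h
  let fA : G.induce (A : Set V) →g G' :=
    ⟨Subtype.val, fun {x y} hxy => avoidA x y x.2 y.2 hxy⟩
  let fB : G.induce (B : Set V) →g G' :=
    ⟨Subtype.val, fun {x y} hxy => avoidB x y x.2 y.2 hxy⟩
  have r1 : G'.Reachable (a₁ : V) (a₂ : V) :=
    (hAconn.preconnected ⟨a₁, ha₁⟩ ⟨a₂, ha₂⟩).map fA
  have r3 : G'.Reachable (b₂ : V) (b₁ : V) :=
    (hBconn.preconnected ⟨b₂, hb₂B⟩ ⟨b₁, hb₁B⟩).map fB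
  have r2 : G'.Adj (a₂ : V) (b₂ : V) := by
    refine ⟨hGadj₂, ?_⟩
    simp only [SimpleGraph.fromEdgeSet_adj, Set.mem_singleton_iff]
    rintro ⟨he, -⟩
    have : (a₂ : V) ∈ s((a₁ : V), (b₁ : V)) := he ▸ Sym2.mem_mk_left _ _
    rcases Sym2.mem_iff.mp this with h | h
    · exact Finset.disjoint_left.mp hYZ (h ▸ a₁.2) a₂.2
    · exact (Finset.disjoint_left.mp hAB ha₂) (h ▸ hb₁B)
  exact r1.trans (r2.reachable.trans r3)

open GraphFair in
/-- Let `G` be a tree, `u` a monotone utility function, and `P` a partition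
of the vertex set into connected bundles. Then `P` contains at least one good bundle for
`u`, i.e., a bundle `P i` with `u (P i) ≥ PMMS(P i ∪ P j)` for every neighbouring bundle
`P j`. -/
theorem tree_monotone_exists_good_bundle {V : Type*} [DecidableEq V]
    (G : SimpleGraph V) (hG : G.IsTree)
    (u : Finset V → ℝ) (hu : MonotoneUtil u)
    {n : ℕ} (hn : 0 < n) (P : Fin n → Finset V) (hP : IsConnAlloc G P) :
    ∃ i : Fin n, ∀ j : Fin n, j ≠ i → AdjUnder G P i j →
      pmms G u (P i ∪ P j) ≤ u (P i) := by
    classical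
  have : Nonempty (Fin n) := Fin.pos_iff_nonempty.mp hn
  obtain ⟨i, hi⟩ := Finite.exists_max fun i : Fin n => u (P i)
  refine ⟨i, fun j hj _ => ?_⟩
  have h0 : 0 ≤ u (P i) := le_trans hu.2 (hu.1 ∅ (P i) (Finset.empty_subset _))
  apply Real.sSup_le _ h0
  rintro x ⟨⟨Y, Z⟩, ⟨hun, hdisj, hYc, hZc⟩, rfl⟩
  have hdisjP : Disjoint (P i) (P j) := hP.2.1 i j (Ne.symm hj)
  have hkey := key_containment G hG.2 (P i) (P j) Y Z hdisjP
    (hP.2.2 i) (hP.2.2 j) hYc hZc hdisj hun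
  have hji : u (P j) ≤ u (P i) := hi j
  rcases hkey with h | h | h | h
  · exact le_trans (min_le_left _ _) (hu.1 _ _ h)
  · exact le_trans (min_le_left _ _) (le_trans (hu.1 _ _ h) hji)
  · exact le_trans (min_le_right _ _) (hu.1 _ _ h)
  · exact le_trans (min_le_right _ _) (le_trans (hu.1 _ _ h) hji)
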